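/- arXiv:2002.04708 — 4 statements merged into one kernel-verified Lean document; each statement's English description precedes it below -/
import Mathlib

section
/- The function f(x) = artanh(1/(k₁·coth(u₁x) + k₂·coth(u₂x))) is concave on (0,∞): f''(x) ≤ 0 for all x > 0. -/
/-- The inverse hyperbolic tangent. -/
noncomputable def artanh (x : ℝ) : ℝ := Real.log ((1 + x) / (1 - x)) / 2

noncomputable def coth (x : ℝ) : ℝ := Real.cosh x / Real.sinh x

lemma one_lt_coth {x : ℝ} (hx : 0 < x) : 1 < coth x := by
  have hs : 0 < Real.sinh x := Real.sinh_pos_iff.mpr hx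
  have hc : Real.sinh x < Real.cosh x := by
    nlinarith [Real.cosh_sub_sinh x, Real.exp_pos (-x)]
  rw [coth, lt_div_iff₀ hs, one_mul]
  exact hc

lemma coth_hasDerivAt {x : ℝ} (hx : Real.sinh x ≠ 0) :
    HasDerivAt coth (1 - coth x ^ 2) x := by
  have h := (Real.hasDerivAt_cosh x).div (Real.hasDerivAt_sinh x) hx
  refine h.congr_deriv ?_
  have h1 : Real.cosh x ^ 2 - Real.sinh x ^ 2 = 1 := Real.cosh_sq_sub_sinh_sq x
  unfold coth
  field_simp

lemma coth_comp_hasDerivAt {u x : ℝ} (hx : Real.sinh (u * x) ≠ 0) :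
    HasDerivAt (fun y => coth (u * y)) ((1 - coth (u * x) ^ 2) * u) x := by
  have h2 : HasDerivAt (fun y : ℝ => u * y) u x := by
    simpa using (hasDerivAt_id x).const_mul u
  exact (coth_hasDerivAt hx).comp x h2

lemma helper_F1 (a b : ℝ) (hp : a + 1 ≠ 0) (hm : a - 1 ≠ 0) :
    -b / (a ^ 2 - 1) = (b / (a + 1) - b / (a - 1)) / 2 := by
  have h : a ^ 2 - 1 = (a + 1) * (a - 1) := by ring
  rw [h]
  field_simp
  ring

lemma helper_F2 (a b c : ℝ) :
    (2 * a * b ^ 2 - c * (a ^ 2 - 1)) / (a ^ 2 - 1) ^ 2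
      = (-c * (a ^ 2 - 1) - -b * (((2 : ℕ) : ℝ) * a ^ (2 - 1) * b)) / (a ^ 2 - 1) ^ 2 := by
  norm_num
  ring

/-- The key algebraic inequality. -/
lemma key_ineq (k₁ k₂ u₁ u₂ c₁ c₂ : ℝ) (hk₁ : 0 < k₁) (hk₂ : 0 < k₂)
    (hk : 1 ≤ k₁ + k₂) (hu₁ : 0 < u₁) (hu₂ : 0 < u₂) (hc₁ : 1 < c₁) (hc₂ : 1 < c₂) :
    2 * (k₁ * c₁ + k₂ * c₂) * (k₁ * u₁ * (1 - c₁ ^ 2) + k₂ * u₂ * (1 - c₂ ^ 2)) ^ 2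
      ≤ 2 * (k₁ * u₁ ^ 2 * c₁ * (c₁ ^ 2 - 1) + k₂ * u₂ ^ 2 * c₂ * (c₂ ^ 2 - 1))
        * ((k₁ * c₁ + k₂ * c₂) ^ 2 - 1) := by
  set s₁ := c₁ ^ 2 - 1 with hs₁def
  set s₂ := c₂ ^ 2 - 1 with hs₂def
  have hs₁ : 0 < s₁ := by nlinarith
  have hs₂ : 0 < s₂ := by nlinarith
  have hc₁0 : 0 < c₁ := by linarith
  have hc₂0 : 0 < c₂ := by linarith
  set A := k₁ * u₁ * s₁ + k₂ * u₂ * s₂ with hA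
  set B := k₁ * u₁ ^ 2 * c₁ * s₁ + k₂ * u₂ ^ 2 * c₂ * s₂ with hB
  set T := k₁ * s₁ * c₂ + k₂ * s₂ * c₁ with hT
  set g := k₁ * c₁ + k₂ * c₂ with hgdef
  have hg0 : 0 < g := by positivity
  have hB0 : 0 ≤ B := by positivity
  have h1 : A ^ 2 * (c₁ * c₂) ≤ B * T := by
    have : B * T - A ^ 2 * (c₁ * c₂) = k₁ * k₂ * s₁ * s₂ * (u₁ * c₁ - u₂ * c₂) ^ 2 := by
      simp only [hA, hB, hT]; ring
    have hnn : 0 ≤ k₁ * k₂ * s₁ * s₂ * (u₁ * c₁ - u₂ * c₂) ^ 2 := by positivity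
    linarith
  have h2 : g * T ≤ (g ^ 2 - 1) * (c₁ * c₂) := by
    have : (g ^ 2 - 1) * (c₁ * c₂) - g * T
        = c₁ * c₂ * ((k₁ + k₂) ^ 2 - 1) + k₁ * k₂ * (c₁ - c₂) ^ 2 := by
      simp only [hgdef, hT, hs₁def, hs₂def]; ring
    have h21 : 1 ≤ (k₁ + k₂) ^ 2 := by nlinarith
    have hn1 : 0 ≤ c₁ * c₂ * ((k₁ + k₂) ^ 2 - 1) :=
      mul_nonneg (mul_pos hc₁0 hc₂0).le (by linarith)
    have hn2 : 0 ≤ k₁ * k₂ * (c₁ - c₂) ^ 2 := by positivity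
    linarith
  have hmain : g * A ^ 2 ≤ B * (g ^ 2 - 1) := by
    have hcc : 0 < c₁ * c₂ := mul_pos hc₁0 hc₂0
    rw [← mul_le_mul_iff_of_pos_right hcc]
    calc g * A ^ 2 * (c₁ * c₂) = g * (A ^ 2 * (c₁ * c₂)) := by ring
      _ ≤ g * (B * T) := by exact mul_le_mul_of_nonneg_left h1 hg0.le
      _ = B * (g * T) := by ring
      _ ≤ B * ((g ^ 2 - 1) * (c₁ * c₂)) := mul_le_mul_of_nonneg_left h2 hB0
      _ = B * (g ^ 2 - 1) * (c₁ * c₂) := by ring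
  have hsq : (k₁ * u₁ * (1 - c₁ ^ 2) + k₂ * u₂ * (1 - c₂ ^ 2)) ^ 2 = A ^ 2 := by
    simp only [hA, hs₁def, hs₂def]; ring
  rw [hsq]
  show 2 * g * A ^ 2 ≤ 2 * B * (g ^ 2 - 1)
  linarith

theorem stmt_0 (k₁ k₂ u₁ u₂ : ℝ) (hk₁ : 0 < k₁) (hk₂ : 0 < k₂)
    (hk : 1 ≤ k₁ + k₂) (hu₁ : 0 < u₁) (hu₂ : 0 < u₂) :
    ConcaveOn ℝ (Set.Ioi 0)
      (fun x => artanh (1 / (k₁ * coth (u₁ * x) + k₂ * coth (u₂ * x)))) ∧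
    ∀ x > (0 : ℝ),
      deriv (deriv (fun x => artanh (1 / (k₁ * coth (u₁ * x) + k₂ * coth (u₂ * x))))) x ≤ 0 := by
  set f : ℝ → ℝ := fun x => artanh (1 / (k₁ * coth (u₁ * x) + k₂ * coth (u₂ * x))) with hf
  set g : ℝ → ℝ := fun x => k₁ * coth (u₁ * x) + k₂ * coth (u₂ * x) with hgdef
  set g' : ℝ → ℝ := fun x =>
    k₁ * u₁ * (1 - coth (u₁ * x) ^ 2) + k₂ * u₂ * (1 - coth (u₂ * x) ^ 2) with hg'def
  set g'' : ℝ → ℝ := fun x =>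
    2 * (k₁ * u₁ ^ 2 * coth (u₁ * x) * (coth (u₁ * x) ^ 2 - 1)
      + k₂ * u₂ ^ 2 * coth (u₂ * x) * (coth (u₂ * x) ^ 2 - 1)) with hg''def
  set F : ℝ → ℝ := fun x => (Real.log (g x + 1) - Real.log (g x - 1)) / 2 with hFdef
  set F1 : ℝ → ℝ := fun x => -(g' x) / (g x ^ 2 - 1) with hF1def
  set F2 : ℝ → ℝ := fun x =>
    (2 * g x * (g' x) ^ 2 - g'' x * (g x ^ 2 - 1)) / (g x ^ 2 - 1) ^ 2 with hF2def
  -- basic facts for x > 0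
  have hc₁ : ∀ x : ℝ, 0 < x → 1 < coth (u₁ * x) := fun x hx =>
    one_lt_coth (mul_pos hu₁ hx)
  have hc₂ : ∀ x : ℝ, 0 < x → 1 < coth (u₂ * x) := fun x hx =>
    one_lt_coth (mul_pos hu₂ hx)
  have hg1 : ∀ x : ℝ, 0 < x → 1 < g x := by
    intro x hx
    have h1 := hc₁ x hx
    have h2 := hc₂ x hx
    have e1 : k₁ * 1 < k₁ * coth (u₁ * x) := mul_lt_mul_of_pos_left h1 hk₁
    have e2 : k₂ * 1 < k₂ * coth (u₂ * x) := mul_lt_mul_of_pos_left h2 hk₂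
    rw [mul_one] at e1 e2
    show 1 < k₁ * coth (u₁ * x) + k₂ * coth (u₂ * x)
    linarith
  have hs₁ : ∀ x : ℝ, 0 < x → Real.sinh (u₁ * x) ≠ 0 := fun x hx =>
    (Real.sinh_pos_iff.mpr (mul_pos hu₁ hx)).ne'
  have hs₂ : ∀ x : ℝ, 0 < x → Real.sinh (u₂ * x) ≠ 0 := fun x hx =>
    (Real.sinh_pos_iff.mpr (mul_pos hu₂ hx)).ne'
  -- f = F on Ioi 0
  have hfF : Set.EqOn f F (Set.Ioi 0) := by
    intro x hx
    have hg1x := hg1 x hx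
    have h0 : g x ≠ 0 := by linarith
    have hm : g x - 1 ≠ 0 := by linarith
    have hp : g x + 1 ≠ 0 := by linarith
    show artanh (1 / g x) = (Real.log (g x + 1) - Real.log (g x - 1)) / 2
    rw [artanh]
    have hgpos : 0 < g x := by linarith
    have hne : 1 - 1 / g x ≠ 0 := by
      have hlt : 1 / g x < 1 := by
        rw [div_lt_one hgpos]; linarith
      intro h
      linarith
    have harg : (1 + 1 / g x) / (1 - 1 / g x) = (g x + 1) / (g x - 1) := by
      rw [div_eq_div_iff hne hm]
      field_simp
    rw [harg, Real.log_div hp hm]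
  -- derivatives of g and g'
  have hgD : ∀ x : ℝ, 0 < x → HasDerivAt g (g' x) x := by
    intro x hx
    have h := ((coth_comp_hasDerivAt (hs₁ x hx)).const_mul k₁).add
      ((coth_comp_hasDerivAt (hs₂ x hx)).const_mul k₂)
    convert h using 1
    show k₁ * u₁ * (1 - coth (u₁ * x) ^ 2) + k₂ * u₂ * (1 - coth (u₂ * x) ^ 2)
      = k₁ * ((1 - coth (u₁ * x) ^ 2) * u₁) + k₂ * ((1 - coth (u₂ * x) ^ 2) * u₂)
    ring
    all_goals rfl
  have hg'D : ∀ x : ℝ, 0 < x → HasDerivAt g' (g'' x) x := by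
    intro x hx
    have h1 : HasDerivAt (fun y => 1 - coth (u₁ * y) ^ 2)
        (-(2 * coth (u₁ * x) ^ 1 * ((1 - coth (u₁ * x) ^ 2) * u₁))) x :=
      (((coth_comp_hasDerivAt (hs₁ x hx)).pow 2)).const_sub 1
    have h2 : HasDerivAt (fun y => 1 - coth (u₂ * y) ^ 2)
        (-(2 * coth (u₂ * x) ^ 1 * ((1 - coth (u₂ * x) ^ 2) * u₂))) x :=
      (((coth_comp_hasDerivAt (hs₂ x hx)).pow 2)).const_sub 1
    have h := ((h1.const_mul (k₁ * u₁))).add ((h2.const_mul (k₂ * u₂)))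
    convert h using 1
    show 2 * (k₁ * u₁ ^ 2 * coth (u₁ * x) * (coth (u₁ * x) ^ 2 - 1)
        + k₂ * u₂ ^ 2 * coth (u₂ * x) * (coth (u₂ * x) ^ 2 - 1))
      = k₁ * u₁ * -(2 * coth (u₁ * x) ^ 1 * ((1 - coth (u₁ * x) ^ 2) * u₁))
        + k₂ * u₂ * -(2 * coth (u₂ * x) ^ 1 * ((1 - coth (u₂ * x) ^ 2) * u₂))
    ring
    all_goals rfl
  -- derivative of F
  have hFD : ∀ x : ℝ, 0 < x → HasDerivAt F (F1 x) x := by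
    intro x hx
    have hg1x := hg1 x hx
    have hp : g x + 1 ≠ 0 := by linarith
    have hm : g x - 1 ≠ 0 := by linarith
    have h1 : HasDerivAt (fun y => Real.log (g y + 1)) (g' x / (g x + 1)) x :=
      (((hgD x hx).add_const 1)).log hp
    have h2 : HasDerivAt (fun y => Real.log (g y - 1)) (g' x / (g x - 1)) x :=
      (((hgD x hx).sub_const 1)).log hm
    have h := (h1.sub h2).div_const 2
    exact h.congr_deriv (helper_F1 (g x) (g' x) hp hm).symm
  -- derivative of F1
  have hF1D : ∀ x : ℝ, 0 < x → HasDerivAt F1 (F2 x) x := by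
    intro x hx
    have hg1x := hg1 x hx
    have hden : g x ^ 2 - 1 ≠ 0 := by nlinarith
    have h := ((hg'D x hx).neg).div (((hgD x hx).pow 2).sub_const 1) hden
    exact h.congr_deriv (helper_F2 (g x) (g' x) (g'' x)).symm
  -- transfer to f via eventual equality
  have hEq : ∀ x : ℝ, 0 < x → f =ᶠ[nhds x] F := fun x hx =>
    Filter.eventuallyEq_of_mem (isOpen_Ioi.mem_nhds hx) hfF
  have hfD : ∀ x : ℝ, 0 < x → HasDerivAt f (F1 x) x := fun x hx =>
    (hFD x hx).congr_of_eventuallyEq (hEq x hx)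
  have hderiv_f : ∀ x : ℝ, 0 < x → deriv f x = F1 x := fun x hx => (hfD x hx).deriv
  have hEq1 : ∀ x : ℝ, 0 < x → deriv f =ᶠ[nhds x] F1 := fun x hx =>
    Filter.eventuallyEq_of_mem (isOpen_Ioi.mem_nhds hx) fun y hy => hderiv_f y hy
  have hf1D : ∀ x : ℝ, 0 < x → HasDerivAt (deriv f) (F2 x) x := fun x hx =>
    (hF1D x hx).congr_of_eventuallyEq (hEq1 x hx)
  have hderiv2 : ∀ x : ℝ, 0 < x → deriv (deriv f) x = F2 x := fun x hx => (hf1D x hx).deriv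
  -- F2 ≤ 0
  have hF2le : ∀ x : ℝ, 0 < x → F2 x ≤ 0 := by
    intro x hx
    have h1 := hc₁ x hx
    have h2 := hc₂ x hx
    have hkey := key_ineq k₁ k₂ u₁ u₂ (coth (u₁ * x)) (coth (u₂ * x))
      hk₁ hk₂ hk hu₁ hu₂ h1 h2
    have hnum : 2 * g x * (g' x) ^ 2 - g'' x * (g x ^ 2 - 1) ≤ 0 := by
      simp only [hgdef, hg'def, hg''def]
      linarith [hkey]
    have hdsq : (0 : ℝ) ≤ (g x ^ 2 - 1) ^ 2 := sq_nonneg _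
    exact div_nonpos_of_nonpos_of_nonneg hnum hdsq
  constructor
  · apply concaveOn_of_deriv2_nonpos (convex_Ioi 0)
    · intro x hx
      exact ((hfD x hx).continuousAt).continuousWithinAt
    · rw [interior_Ioi]
      intro x hx
      exact (hfD x hx).differentiableAt.differentiableWithinAt
    · rw [interior_Ioi]
      intro x hx
      exact (hf1D x hx).differentiableAt.differentiableWithinAt
    · rw [interior_Ioi]
      intro x hx
      have : deriv^[2] f x = deriv (deriv f) x := by
        simp [Function.iterate_succ_apply', Function.iterate_one]
      rw [this, hderiv2 x hx]
      exact hF2le x hx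
  · intro x hx
    rw [hderiv2 x hx]
    exact hF2le x hx
end

section
/- The function α ↦ α²·(1 + cot(kα)²) is (weakly) increasing on the interval of α > 0 with kα ∈ (0, π/2], for any fixed k > 0. -/
theorem stmt_8 (k : ℝ) (hk : 0 < k) :
    MonotoneOn (fun α => α ^ 2 * (1 + Real.cot (k * α) ^ 2))
      (Set.Ioc 0 (Real.pi / (2 * k))) := by
  intro a ha b hb hab
  obtain ⟨ha0, _⟩ := ha
  obtain ⟨hb0, hb2⟩ := hb
  have hka : 0 < k * a := mul_pos hk ha0
  have hkb : 0 < k * b := mul_pos hk hb0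
  have hbpi : k * b ≤ Real.pi / 2 := by
    rw [le_div_iff₀ (by positivity)] at hb2
    nlinarith
  have hapi : k * a ≤ Real.pi / 2 := le_trans (by nlinarith) hbpi
  have hpi := Real.pi_pos
  have hsa : 0 < Real.sin (k * a) :=
    Real.sin_pos_of_pos_of_lt_pi hka (by linarith)
  have hsb : 0 < Real.sin (k * b) :=
    Real.sin_pos_of_pos_of_lt_pi hkb (by linarith)
  -- key: a * sin(kb) ≤ b * sin(ka)
  have key : a * Real.sin (k * b) ≤ b * Real.sin (k * a) := by
    have hconc := strictConcaveOn_sin_Icc.concaveOn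
    have hkbmem : k * b ∈ Set.Icc 0 Real.pi := ⟨hkb.le, by linarith⟩
    have h0mem : (0:ℝ) ∈ Set.Icc 0 Real.pi := ⟨le_refl 0, hpi.le⟩
    have ht0 : 0 ≤ a / b := by positivity
    have ht1 : 0 ≤ 1 - a / b := by
      have : a / b ≤ 1 := div_le_one_of_le₀ hab hb0.le
      linarith
    have hcc := hconc.2 hkbmem h0mem ht0 ht1 (by ring)
    simp only [smul_eq_mul, mul_zero, add_zero, Real.sin_zero] at hcc
    have heq : a / b * (k * b) = k * a := by field_simp
    rw [heq] at hcc
    have := mul_le_mul_of_nonneg_left hcc hb0.le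
    calc a * Real.sin (k * b) = b * (a / b * Real.sin (k * b)) := by
          field_simp
      _ ≤ b * Real.sin (k * a) := this
  -- rewrite 1 + cot² = 1 / sin²
  have hrw : ∀ x : ℝ, Real.sin x ≠ 0 →
      1 + Real.cot x ^ 2 = 1 / Real.sin x ^ 2 := by
    intro x hx
    rw [Real.cot_eq_cos_div_sin, div_pow]
    field_simp
    exact Real.sin_sq_add_cos_sq x
  simp only [hrw _ hsa.ne', hrw _ hsb.ne']
  have hdiv : a / Real.sin (k * a) ≤ b / Real.sin (k * b) :=
    (div_le_div_iff₀ hsa hsb).2 (by linarith)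
  have hsq := mul_self_le_mul_self (by positivity) hdiv
  have ha' : a ^ 2 * (1 / Real.sin (k * a) ^ 2)
      = (a / Real.sin (k * a)) * (a / Real.sin (k * a)) := by
    field_simp
  have hb' : b ^ 2 * (1 / Real.sin (k * b) ^ 2)
      = (b / Real.sin (k * b)) * (b / Real.sin (k * b)) := by
    field_simp
  rw [ha', hb']
  exact hsq
end

section
/- Let 0 ≤ θ₁ < λ < θ₂ < π and γ₁, γ₂ > 0. For s > 0 define ρ(s) ∈ (0,1) by artanh(ρ(s)) = (1/2)·artanh( sin(θ₂−θ₁) / (coth(2γ₁s)·sin(θ₂−λ) + coth(2γ₂s)·sin(λ−θ₁)) ), and define r(s) ∈ (0,1) by artanh(r(s)) = s·artanh(ρ(1)). Then for all s ∈ (0,1], ρ(s) ≥ r(s). -/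
open Real hiding artanh
open Set

noncomputable def Df (b₁ b₂ g₁ g₂ t : ℝ) : ℝ := coth (g₁*t)*b₁ + coth (g₂*t)*b₂
noncomputable def Ef (b₁ b₂ g₁ g₂ t : ℝ) : ℝ :=
  g₁*b₁/(Real.sinh (g₁*t))^2 + g₂*b₂/(Real.sinh (g₂*t))^2
noncomputable def psif (A b₁ b₂ g₁ g₂ t : ℝ) : ℝ :=
  A * Ef b₁ b₂ g₁ g₂ t / ((Df b₁ b₂ g₁ g₂ t)^2 - A^2)

lemma hasDerivAt_coth {g t : ℝ} (hg : 0 < g) (ht : 0 < t) :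
    HasDerivAt (fun x => coth (g*x)) (-(g/(Real.sinh (g*t))^2)) t := by
  have hsh : 0 < Real.sinh (g*t) := Real.sinh_pos_iff.2 (mul_pos hg ht)
  have h1 : HasDerivAt (fun x : ℝ => g*x) g t := by
    simpa using (hasDerivAt_id t).const_mul g
  have hc : HasDerivAt (fun x => Real.cosh (g*x)) (Real.sinh (g*t) * g) t :=
    (Real.hasDerivAt_cosh (g*t)).comp t h1
  have hs : HasDerivAt (fun x => Real.sinh (g*x)) (Real.cosh (g*t) * g) t :=
    (Real.hasDerivAt_sinh (g*t)).comp t h1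
  have hdiv := hc.div hs hsh.ne'
  have hid := Real.cosh_sq_sub_sinh_sq (g*t)
  have h2 : (Real.sinh (g*t) * g * Real.sinh (g*t) - Real.cosh (g*t) * (Real.cosh (g*t) * g))
      / (Real.sinh (g*t))^2 = -(g/(Real.sinh (g*t))^2) := by
    rw [show Real.sinh (g*t) * g * Real.sinh (g*t) - Real.cosh (g*t) * (Real.cosh (g*t) * g)
      = -g from by linear_combination (-g) * hid]
    ring
  simp only [coth]
  exact h2 ▸ hdiv

lemma Df_hasDeriv {b₁ b₂ g₁ g₂ t : ℝ} (hg₁ : 0 < g₁) (hg₂ : 0 < g₂) (ht : 0 < t) :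
    HasDerivAt (Df b₁ b₂ g₁ g₂) (-(Ef b₁ b₂ g₁ g₂ t)) t := by
  have h := ((hasDerivAt_coth hg₁ ht).mul_const b₁).add ((hasDerivAt_coth hg₂ ht).mul_const b₂)
  unfold Df Ef
  exact h.congr_deriv (by ring)

lemma coth_gt_one {g t : ℝ} (hg : 0 < g) (ht : 0 < t) : 1 < coth (g*t) := by
  have h1 : 0 < Real.sinh (g*t) := Real.sinh_pos_iff.2 (mul_pos hg ht)
  have h2 : Real.sinh (g*t) < Real.cosh (g*t) := by
    nlinarith [Real.cosh_sub_sinh (g*t), Real.exp_pos (-(g*t))]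
  exact (one_lt_div h1).2 h2

lemma Df_gt {A b₁ b₂ g₁ g₂ t : ℝ} (hA : 0 < A) (hAb : A ≤ b₁ + b₂)
    (hb₁ : 0 < b₁) (hb₂ : 0 < b₂) (hg₁ : 0 < g₁) (hg₂ : 0 < g₂) (ht : 0 < t) :
    A < Df b₁ b₂ g₁ g₂ t := by
  have h1 := coth_gt_one hg₁ ht
  have h2 := coth_gt_one hg₂ ht
  unfold Df
  nlinarith

lemma phif_eq {A b₁ b₂ g₁ g₂ t : ℝ} (hA : 0 < A) (hAD : A < Df b₁ b₂ g₁ g₂ t) :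
    artanh (A / Df b₁ b₂ g₁ g₂ t)
      = (Real.log (Df b₁ b₂ g₁ g₂ t + A) - Real.log (Df b₁ b₂ g₁ g₂ t - A)) / 2 := by
  set D := Df b₁ b₂ g₁ g₂ t with hD
  have hD0 : 0 < D := lt_trans hA hAD
  have hDA : 0 < D - A := by linarith
  have hDA' : 0 < D + A := by linarith
  unfold artanh
  have hlt : (0:ℝ) < 1 - A/D := by
    have : A/D < 1 := (div_lt_one hD0).2 hAD
    linarith
  rw [show (1 + A/D)/(1 - A/D) = (D + A)/(D - A) from by
    rw [div_eq_div_iff hlt.ne' hDA.ne']; field_simp]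
  rw [Real.log_div hDA'.ne' hDA.ne']

lemma phif_hasDeriv {A b₁ b₂ g₁ g₂ t : ℝ} (hA : 0 < A) (hAb : A ≤ b₁ + b₂)
    (hb₁ : 0 < b₁) (hb₂ : 0 < b₂) (hg₁ : 0 < g₁) (hg₂ : 0 < g₂) (ht : 0 < t) :
    HasDerivAt (fun x => artanh (A / Df b₁ b₂ g₁ g₂ x)) (psif A b₁ b₂ g₁ g₂ t) t := by
  have hAD := Df_gt hA hAb hb₁ hb₂ hg₁ hg₂ ht
  have hD0 : 0 < Df b₁ b₂ g₁ g₂ t := lt_trans hA hAD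
  have hDA : 0 < Df b₁ b₂ g₁ g₂ t - A := by linarith
  have hDA' : 0 < Df b₁ b₂ g₁ g₂ t + A := by linarith
  have hDd := Df_hasDeriv (b₁ := b₁) (b₂ := b₂) hg₁ hg₂ ht
  have hlog1 : HasDerivAt (fun x => Real.log (Df b₁ b₂ g₁ g₂ x + A))
      ((Df b₁ b₂ g₁ g₂ t + A)⁻¹ * -(Ef b₁ b₂ g₁ g₂ t)) t :=
    by have := (Real.hasDerivAt_log hDA'.ne').comp t (hDd.add_const A); exact this
  have hlog2 : HasDerivAt (fun x => Real.log (Df b₁ b₂ g₁ g₂ x - A))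
      ((Df b₁ b₂ g₁ g₂ t - A)⁻¹ * -(Ef b₁ b₂ g₁ g₂ t)) t :=
    by have := (Real.hasDerivAt_log hDA.ne').comp t (hDd.sub_const A); exact this
  have hG := (hlog1.sub hlog2).div_const 2
  have hval : ((Df b₁ b₂ g₁ g₂ t + A)⁻¹ * -(Ef b₁ b₂ g₁ g₂ t)
      - (Df b₁ b₂ g₁ g₂ t - A)⁻¹ * -(Ef b₁ b₂ g₁ g₂ t)) / 2 = psif A b₁ b₂ g₁ g₂ t := by
    unfold psif
    rw [div_eq_div_iff (by norm_num) (by nlinarith : (Df b₁ b₂ g₁ g₂ t)^2 - A^2 ≠ 0)]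
    field_simp
    ring
  rw [hval] at hG
  apply hG.congr_of_eventuallyEq
  filter_upwards [Ioi_mem_nhds ht] with x hx
  exact phif_eq hA (Df_gt hA hAb hb₁ hb₂ hg₁ hg₂ hx)

lemma key_poly' (A b₁ b₂ g₁ g₂ u v p q : ℝ) (hA : 0 < A) (hAb : A ≤ b₁+b₂)
    (hb₁ : 0 < b₁) (hb₂ : 0 < b₂) (hg₁ : 0 < g₁) (hg₂ : 0 < g₂)
    (hu : 0 < u) (hv : 0 < v) (hp : 0 < p) (hq : 0 < q)
    (hpu : p^2 = 1 + u^2) (hqv : q^2 = 1 + v^2) :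
    (b₁*p*v + b₂*q*u) * (g₁*b₁*v^2 + g₂*b₂*u^2)^2 ≤
      (g₁^2*b₁*p*v^3 + g₂^2*b₂*q*u^3) * ((b₁*p*v + b₂*q*u)^2 - A^2*u^2*v^2) := by
  have hsqA : 0 ≤ (b₁+b₂)^2 - A^2 := by nlinarith
  have step1 : p*q*(g₁*b₁*v^2 + g₂*b₂*u^2)^2 ≤
      (g₁^2*b₁*p*v^3 + g₂^2*b₂*q*u^3)*(b₁*v*q + b₂*u*p) := by
    nlinarith [mul_nonneg (mul_nonneg (mul_pos hb₁ hb₂).le (mul_pos hu hv).le)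
      (sq_nonneg (g₁*p*v - g₂*q*u))]
  have hid : p*q*((b₁*p*v + b₂*q*u)^2 - A^2*u^2*v^2) - (b₁*p*v + b₂*q*u)*(b₁*v*q + b₂*u*p)
      = p*q*u^2*v^2*(b₁^2+b₂^2-A^2) + b₁*b₂*u*v*(p^2*v^2+q^2*u^2) := by
    linear_combination (b₁^2*p*q*v^2 + b₁*b₂*u*v*q^2) * hpu + (b₂^2*p*q*u^2 + b₁*b₂*u*v*p^2) * hqv
  have step2 : (b₁*p*v + b₂*q*u)*(b₁*v*q + b₂*u*p) ≤
      p*q*((b₁*p*v + b₂*q*u)^2 - A^2*u^2*v^2) := by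
    nlinarith [hid, mul_nonneg (mul_nonneg (mul_pos hb₁ hb₂).le (mul_pos hu hv).le)
      (sq_nonneg (p*v - q*u)),
      mul_nonneg (mul_nonneg (mul_pos hp hq).le
        (mul_pos (mul_pos hu hu) (mul_pos hv hv)).le) hsqA]
  have hbpos : 0 < b₁*p*v + b₂*q*u := by positivity
  have hgpos : 0 < g₁^2*b₁*p*v^3 + g₂^2*b₂*q*u^3 := by positivity
  have h1' := mul_le_mul_of_nonneg_left step1 hbpos.le
  have h2' := mul_le_mul_of_nonneg_left step2 hgpos.le
  have hpq : 0 < p*q := mul_pos hp hq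
  have hfin : p*q*((b₁*p*v + b₂*q*u) * (g₁*b₁*v^2 + g₂*b₂*u^2)^2) ≤
      p*q*((g₁^2*b₁*p*v^3 + g₂^2*b₂*q*u^3) * ((b₁*p*v + b₂*q*u)^2 - A^2*u^2*v^2)) := by
    calc p*q*((b₁*p*v + b₂*q*u) * (g₁*b₁*v^2 + g₂*b₂*u^2)^2)
        = (b₁*p*v + b₂*q*u)*(p*q*(g₁*b₁*v^2 + g₂*b₂*u^2)^2) := by ring
      _ ≤ (b₁*p*v + b₂*q*u)*((g₁^2*b₁*p*v^3 + g₂^2*b₂*q*u^3)*(b₁*v*q + b₂*u*p)) := h1'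
      _ = (g₁^2*b₁*p*v^3 + g₂^2*b₂*q*u^3)*((b₁*p*v + b₂*q*u)*(b₁*v*q + b₂*u*p)) := by ring
      _ ≤ (g₁^2*b₁*p*v^3 + g₂^2*b₂*q*u^3)*(p*q*((b₁*p*v + b₂*q*u)^2 - A^2*u^2*v^2)) := h2'
      _ = p*q*((g₁^2*b₁*p*v^3 + g₂^2*b₂*q*u^3) * ((b₁*p*v + b₂*q*u)^2 - A^2*u^2*v^2)) := by ring
  exact le_of_mul_le_mul_left hfin hpq

set_option maxHeartbeats 1600000 in
lemma psif_hasDeriv {A b₁ b₂ g₁ g₂ t : ℝ} (hA : 0 < A) (hAb : A ≤ b₁ + b₂)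
    (hb₁ : 0 < b₁) (hb₂ : 0 < b₂) (hg₁ : 0 < g₁) (hg₂ : 0 < g₂) (ht : 0 < t) :
    ∃ w, HasDerivAt (psif A b₁ b₂ g₁ g₂) w t ∧ w ≤ 0 := by
  have hAD := Df_gt hA hAb hb₁ hb₂ hg₁ hg₂ ht
  have hD0 : 0 < Df b₁ b₂ g₁ g₂ t := lt_trans hA hAD
  have hu : 0 < Real.sinh (g₁*t) := Real.sinh_pos_iff.2 (mul_pos hg₁ ht)
  have hv : 0 < Real.sinh (g₂*t) := Real.sinh_pos_iff.2 (mul_pos hg₂ ht)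
  have hp : 0 < Real.cosh (g₁*t) := Real.cosh_pos _
  have hq : 0 < Real.cosh (g₂*t) := Real.cosh_pos _
  set u := Real.sinh (g₁*t) with hud
  set v := Real.sinh (g₂*t) with hvd
  set p := Real.cosh (g₁*t) with hpd
  set q := Real.cosh (g₂*t) with hqd
  have hpu : p^2 = 1 + u^2 := Real.cosh_sq' (g₁*t)
  have hqv : q^2 = 1 + v^2 := Real.cosh_sq' (g₂*t)
  -- derivative of Ef
  have hl1 : HasDerivAt (fun x : ℝ => g₁*x) g₁ t := by
    simpa using (hasDerivAt_id t).const_mul g₁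
  have hl2 : HasDerivAt (fun x : ℝ => g₂*x) g₂ t := by
    simpa using (hasDerivAt_id t).const_mul g₂
  have hs1 : HasDerivAt (fun x => Real.sinh (g₁*x)) (p * g₁) t :=
    (Real.hasDerivAt_sinh (g₁*t)).comp t hl1
  have hs2 : HasDerivAt (fun x => Real.sinh (g₂*x)) (q * g₂) t :=
    (Real.hasDerivAt_sinh (g₂*t)).comp t hl2
  have hsq1 : HasDerivAt (fun x => (Real.sinh (g₁*x))^2) (2 * u^1 * (p*g₁)) t := by
    simpa using hs1.fun_pow 2
  have hsq2 : HasDerivAt (fun x => (Real.sinh (g₂*x))^2) (2 * v^1 * (q*g₂)) t := by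
    simpa using hs2.fun_pow 2
  have hE1 : HasDerivAt (fun x => g₁*b₁/(Real.sinh (g₁*x))^2)
      ((0 * u^2 - g₁*b₁*(2 * u^1 * (p*g₁))) / (u^2)^2) t :=
    (hasDerivAt_const t (g₁*b₁)).div hsq1 (by positivity)
  have hE2 : HasDerivAt (fun x => g₂*b₂/(Real.sinh (g₂*x))^2)
      ((0 * v^2 - g₂*b₂*(2 * v^1 * (q*g₂))) / (v^2)^2) t :=
    (hasDerivAt_const t (g₂*b₂)).div hsq2 (by positivity)
  have hEd : HasDerivAt (Ef b₁ b₂ g₁ g₂)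
      ((0 * u^2 - g₁*b₁*(2 * u^1 * (p*g₁))) / (u^2)^2
        + (0 * v^2 - g₂*b₂*(2 * v^1 * (q*g₂))) / (v^2)^2) t := hE1.add hE2
  -- derivative of denominator
  have hDd := Df_hasDeriv (b₁ := b₁) (b₂ := b₂) hg₁ hg₂ ht
  have hden : HasDerivAt (fun x => (Df b₁ b₂ g₁ g₂ x)^2 - A^2)
      (2 * (Df b₁ b₂ g₁ g₂ t)^1 * -(Ef b₁ b₂ g₁ g₂ t)) t := by
    simpa using (hDd.pow 2).sub_const (A^2)
  have hdenne : (Df b₁ b₂ g₁ g₂ t)^2 - A^2 ≠ 0 := by nlinarith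
  have hpsi := (hEd.const_mul A).div hden hdenne
  -- values of Df, Ef at t
  have hDval : Df b₁ b₂ g₁ g₂ t = (b₁*p*v + b₂*q*u)/(u*v) := by
    unfold Df coth
    rw [← hud, ← hvd, ← hpd, ← hqd]
    field_simp
  have hEval : Ef b₁ b₂ g₁ g₂ t = (g₁*b₁*v^2 + g₂*b₂*u^2)/(u^2*v^2) := by
    unfold Ef
    rw [← hud, ← hvd]
    field_simp
  have key := key_poly' A b₁ b₂ g₁ g₂ u v p q hA hAb hb₁ hb₂ hg₁ hg₂ hu hv hp hq hpu hqv
  refine ⟨_, hpsi, ?_⟩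
  apply div_nonpos_of_nonpos_of_nonneg _ (by positivity)
  have heq : A * ((0 * u^2 - g₁*b₁*(2 * u^1 * (p*g₁))) / (u^2)^2
        + (0 * v^2 - g₂*b₂*(2 * v^1 * (q*g₂))) / (v^2)^2) * ((Df b₁ b₂ g₁ g₂ t)^2 - A^2)
      - A * Ef b₁ b₂ g₁ g₂ t * (2 * (Df b₁ b₂ g₁ g₂ t)^1 * -(Ef b₁ b₂ g₁ g₂ t))
      = -(2 * A * ((g₁^2*b₁*p*v^3 + g₂^2*b₂*q*u^3) * ((b₁*p*v + b₂*q*u)^2 - A^2*u^2*v^2)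
          - (b₁*p*v + b₂*q*u) * (g₁*b₁*v^2 + g₂*b₂*u^2)^2) / (u^5*v^5)) := by
    rw [hDval, hEval]
    field_simp
    ring
  rw [heq, neg_nonpos]
  apply div_nonneg _ (by positivity)
  nlinarith [key]

lemma artanh_nonneg {x : ℝ} (h0 : 0 ≤ x) (h1 : x < 1) : 0 ≤ artanh x := by
  unfold artanh
  have h : (1:ℝ) ≤ (1+x)/(1-x) := (one_le_div (by linarith)).2 (by linarith)
  have := Real.log_nonneg h
  linarith

lemma artanh_lt_artanh {x y : ℝ} (h0 : 0 ≤ x) (hxy : x < y) (h1 : y < 1) :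
    artanh x < artanh y := by
  unfold artanh
  have h1x : (0:ℝ) < 1 - x := by linarith
  have h1y : (0:ℝ) < 1 - y := by linarith
  have hx : (0:ℝ) < (1+x)/(1-x) := by positivity
  have h : (1+x)/(1-x) < (1+y)/(1-y) := by
    rw [div_lt_div_iff₀ h1x h1y]; nlinarith
  have := Real.log_lt_log hx h
  linarith

lemma phi_slope {A b₁ b₂ g₁ g₂ : ℝ} (hA : 0 < A) (hAb : A ≤ b₁ + b₂)
    (hb₁ : 0 < b₁) (hb₂ : 0 < b₂) (hg₁ : 0 < g₁) (hg₂ : 0 < g₂)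
    {s : ℝ} (hs0 : 0 < s) (hs1 : s ≤ 1) :
    s * artanh (A / Df b₁ b₂ g₁ g₂ 1) ≤ artanh (A / Df b₁ b₂ g₁ g₂ s) := by
  set φ : ℝ → ℝ := fun x => artanh (A / Df b₁ b₂ g₁ g₂ x) with hφdef
  have hφd : ∀ x : ℝ, 0 < x → HasDerivAt φ (psif A b₁ b₂ g₁ g₂ x) x := fun x hx =>
    phif_hasDeriv hA hAb hb₁ hb₂ hg₁ hg₂ hx
  have hφnn : ∀ x : ℝ, 0 < x → 0 ≤ φ x := by
    intro x hx
    have hAD := Df_gt hA hAb hb₁ hb₂ hg₁ hg₂ hx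
    have hD0 : 0 < Df b₁ b₂ g₁ g₂ x := lt_trans hA hAD
    exact artanh_nonneg (by positivity) ((div_lt_one hD0).2 hAD)
  -- ψ is antitone on (0, ∞)
  have hanti : AntitoneOn (psif A b₁ b₂ g₁ g₂) (Ioi 0) := by
    apply antitoneOn_of_deriv_nonpos (convex_Ioi 0)
    · intro x hx
      obtain ⟨w, hw, -⟩ := psif_hasDeriv hA hAb hb₁ hb₂ hg₁ hg₂ (mem_Ioi.1 hx)
      exact hw.continuousAt.continuousWithinAt
    · rw [interior_Ioi]
      intro x hx
      obtain ⟨w, hw, -⟩ := psif_hasDeriv hA hAb hb₁ hb₂ hg₁ hg₂ (mem_Ioi.1 hx)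
      exact hw.differentiableAt.differentiableWithinAt
    · rw [interior_Ioi]
      intro x hx
      obtain ⟨w, hw, hw0⟩ := psif_hasDeriv hA hAb hb₁ hb₂ hg₁ hg₂ (mem_Ioi.1 hx)
      rw [hw.deriv]; exact hw0
  rcases eq_or_lt_of_le hs1 with rfl | hs1'
  · linarith [hφnn 1 one_pos]
  -- s < 1 : MVT on [s, 1]
  have hcont : ∀ a b : ℝ, 0 < a → ContinuousOn φ (Icc a b) := by
    intro a b ha
    intro x hx
    exact (hφd x (lt_of_lt_of_le ha hx.1)).continuousAt.continuousWithinAt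
  obtain ⟨ξ, hξmem, hξeq⟩ := exists_hasDerivAt_eq_slope φ (psif A b₁ b₂ g₁ g₂) hs1'
    (hcont s 1 hs0) (fun x hx => hφd x (lt_trans hs0 hx.1))
  -- for every t ∈ (0, s) : φ s ≥ ψ ξ * (s - t)
  have hmain : ∀ t, 0 < t → t < s → psif A b₁ b₂ g₁ g₂ ξ * (s - t) ≤ φ s := by
    intro t ht hts
    obtain ⟨ζ, hζmem, hζeq⟩ := exists_hasDerivAt_eq_slope φ (psif A b₁ b₂ g₁ g₂) hts
      (hcont t s ht) (fun x hx => hφd x (lt_trans ht hx.1))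
    have hle : psif A b₁ b₂ g₁ g₂ ξ ≤ psif A b₁ b₂ g₁ g₂ ζ :=
      hanti (mem_Ioi.2 (lt_trans ht hζmem.1)) (mem_Ioi.2 (lt_trans hs0 hξmem.1))
        (le_of_lt (lt_trans hζmem.2 hξmem.1))
    have h1 : φ s - φ t = psif A b₁ b₂ g₁ g₂ ζ * (s - t) := by
      rw [hζeq, div_mul_cancel₀ _ (by linarith : s - t ≠ 0)]
    have h2 := hφnn t ht
    nlinarith [mul_le_mul_of_nonneg_right hle (by linarith : (0:ℝ) ≤ s - t)]
  -- hence φ s ≥ ψ ξ * s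
  have hKs : psif A b₁ b₂ g₁ g₂ ξ * s ≤ φ s := by
    set K := psif A b₁ b₂ g₁ g₂ ξ with hK
    rcases le_or_gt K 0 with hK0 | hK0
    · have := hφnn s hs0
      nlinarith
    · by_contra hcon
      push_neg at hcon
      have hφs := hφnn s hs0
      have ht0 : 0 < (K*s - φ s)/(2*K) := div_pos (by linarith) (by positivity)
      have hts : (K*s - φ s)/(2*K) < s := by
        rw [div_lt_iff₀ (by positivity)]
        nlinarith
      have := hmain _ ht0 hts
      have hexp : K * (s - (K*s - φ s)/(2*K)) = K*s - (K*s - φ s)/2 := by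
        field_simp
      rw [hexp] at this
      linarith
  -- conclude
  have hξval : psif A b₁ b₂ g₁ g₂ ξ = (φ 1 - φ s)/(1 - s) := by rw [hξeq]
  rw [hξval] at hKs
  have h1s : (0:ℝ) < 1 - s := by linarith
  have := mul_le_mul_of_nonneg_right hKs h1s.le
  rw [div_mul_eq_mul_div, mul_comm] at this
  have h2 : (φ 1 - φ s) * s ≤ φ s * (1 - s) := by
    calc (φ 1 - φ s) * s = (φ 1 - φ s)/(1-s)*s*(1-s) := by field_simp
    _ ≤ φ s * (1-s) := mul_le_mul_of_nonneg_right hKs h1s.le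
  nlinarith

theorem stmt_13 (θ₁ lam θ₂ γ₁ γ₂ : ℝ) (h₀ : 0 ≤ θ₁) (h₁ : θ₁ < lam)
    (h₂ : lam < θ₂) (h₃ : θ₂ < Real.pi) (hγ₁ : 0 < γ₁) (hγ₂ : 0 < γ₂)
    (ρ r : ℝ → ℝ)
    (hρ : ∀ s > (0 : ℝ), ρ s ∈ Set.Ioo (0 : ℝ) 1 ∧
      artanh (ρ s) = (1 / 2) * artanh (Real.sin (θ₂ - θ₁) /
        (coth (2 * γ₁ * s) * Real.sin (θ₂ - lam) +
         coth (2 * γ₂ * s) * Real.sin (lam - θ₁))))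
    (hr : ∀ s > (0 : ℝ), r s ∈ Set.Ioo (0 : ℝ) 1 ∧
      artanh (r s) = s * artanh (ρ 1)) :
    ∀ s ∈ Set.Ioc (0 : ℝ) 1, r s ≤ ρ s := by
  set A := Real.sin (θ₂ - θ₁) with hAdef
  set b₁ := Real.sin (θ₂ - lam) with hb₁def
  set b₂ := Real.sin (lam - θ₁) with hb₂def
  have hA : 0 < A := Real.sin_pos_of_pos_of_lt_pi (by linarith) (by linarith)
  have hb₁ : 0 < b₁ := Real.sin_pos_of_pos_of_lt_pi (by linarith) (by linarith)
  have hb₂ : 0 < b₂ := Real.sin_pos_of_pos_of_lt_pi (by linarith) (by linarith)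
  have hAb : A ≤ b₁ + b₂ := by
    rw [hAdef, show θ₂ - θ₁ = (θ₂ - lam) + (lam - θ₁) by ring, Real.sin_add]
    have c1 := Real.cos_le_one (θ₂ - lam)
    have c2 := Real.cos_le_one (lam - θ₁)
    nlinarith
  intro s hs
  obtain ⟨hs0, hs1⟩ := hs
  obtain ⟨hρs01, hρseq⟩ := hρ s hs0
  obtain ⟨hρ101, hρ1eq⟩ := hρ 1 one_pos
  obtain ⟨hrs01, hrseq⟩ := hr s hs0
  have hslope := phi_slope (g₁ := 2*γ₁) (g₂ := 2*γ₂) hA hAb hb₁ hb₂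
    (by linarith) (by linarith) hs0 hs1
  have hart : artanh (r s) ≤ artanh (ρ s) := by
    rw [hrseq, hρseq, hρ1eq]
    unfold Df at hslope
    calc s * (1/2 * artanh (A / (coth (2*γ₁*1) * b₁ + coth (2*γ₂*1) * b₂)))
        = (1/2) * (s * artanh (A / (coth (2*γ₁*1) * b₁ + coth (2*γ₂*1) * b₂))) := by ring
      _ ≤ (1/2) * artanh (A / (coth (2*γ₁*s) * b₁ + coth (2*γ₂*s) * b₂)) := by linarith
  by_contra hcon
  push_neg at hcon
  have := artanh_lt_artanh hρs01.1.le hcon hrs01.2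
  linarith
end

section
/- Let γ be a hyperbolic geodesic in the Poincaré disk 𝔻 not passing through 0, and let H be the closed hyperbolic half-plane bounded by γ containing 0. Then for any k ∈ (0,1), the radial hyperbolic contraction δ^h_{0,k}(H) = { tanh(k·artanh(r))·e^{iθ} : r·e^{iθ} ∈ H } is not hyperbolically convex. -/
/-- Hyperbolic distance in the Poincaré disk. -/
noncomputable def hdist (u v : ℂ) : ℝ :=
  2 * artanh (‖(u - v) / (1 - (starRingEnd ℂ) v * u)‖)

/-- A set in the unit disk is hyperbolically convex if, together with any two of its
points, it contains every point of the disk lying on the hyperbolic geodesic segment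
between them (characterized metrically). -/
def hConvex (C : Set ℂ) : Prop :=
  ∀ u ∈ C, ∀ v ∈ C, ∀ z : ℂ, ‖z‖ < 1 →
    hdist u z + hdist z v = hdist u v → z ∈ C

/-- Radial hyperbolic dilation about 0 with factor k. -/
noncomputable def hDil (k : ℝ) (z : ℂ) : ℂ :=
  (Real.tanh (k * artanh ‖z‖) / ‖z‖ : ℝ) • z

set_option maxHeartbeats 1000000

lemma tanh_eq_exp (x : ℝ) :
    Real.tanh x = (Real.exp (2*x) - 1) / (Real.exp (2*x) + 1) := by
  rw [Real.tanh_eq_sinh_div_cosh, Real.sinh_eq, Real.cosh_eq]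
  have h1 : Real.exp x ≠ 0 := (Real.exp_pos x).ne'
  have h2 : Real.exp x + Real.exp (-x) ≠ 0 := by positivity
  have h3 : Real.exp (2*x) + 1 ≠ 0 := by positivity
  rw [Real.exp_neg] at *
  rw [show (2:ℝ)*x = x + x by ring, Real.exp_add] at *
  field_simp

lemma artanh_tanh (x : ℝ) : artanh (Real.tanh x) = x := by
  have hE : (0:ℝ) < Real.exp (2*x) := Real.exp_pos _
  rw [artanh, tanh_eq_exp]
  have h3 : Real.exp (2*x) + 1 ≠ 0 := by positivity
  have h1 : (1 + (Real.exp (2*x) - 1)/(Real.exp (2*x)+1)) /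
      (1 - (Real.exp (2*x) - 1)/(Real.exp (2*x)+1)) = Real.exp (2*x) := by
    rw [div_eq_iff]
    · field_simp
      ring
    · intro h
      rw [sub_eq_zero, eq_comm, div_eq_one_iff_eq h3] at h
      linarith
  rw [h1, Real.log_exp]; ring

lemma tanh_artanh {x : ℝ} (h1 : -1 < x) (h2 : x < 1) : Real.tanh (artanh x) = x := by
  have hx1 : (0:ℝ) < 1 - x := by linarith
  have hx2 : (0:ℝ) < 1 + x := by linarith
  rw [tanh_eq_exp, artanh]
  rw [show 2 * (Real.log ((1+x)/(1-x))/2) = Real.log ((1+x)/(1-x)) by ring,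
      Real.exp_log (by positivity)]
  rw [div_eq_iff (by positivity)]
  field_simp
  ring

lemma tanh_strictMono : StrictMono Real.tanh := by
  intro a b hab
  rw [tanh_eq_exp, tanh_eq_exp]
  have ha : (0:ℝ) < Real.exp (2*a) := Real.exp_pos _
  have hb : (0:ℝ) < Real.exp (2*b) := Real.exp_pos _
  have h : Real.exp (2*a) < Real.exp (2*b) := Real.exp_lt_exp.2 (by linarith)
  rw [div_lt_div_iff₀ (by positivity) (by positivity)]
  nlinarith

lemma tanh_pos {x : ℝ} (h : 0 < x) : 0 < Real.tanh x := by
  have := tanh_strictMono h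
  rwa [Real.tanh_zero] at this

lemma tanh_lt_one (x : ℝ) : Real.tanh x < 1 := by
  rw [tanh_eq_exp]
  have : (0:ℝ) < Real.exp (2*x) := Real.exp_pos _
  rw [div_lt_one (by positivity)]
  linarith

lemma artanh_pos {x : ℝ} (h0 : 0 < x) (h1 : x < 1) : 0 < artanh x := by
  have h := tanh_artanh (by linarith : (-1:ℝ) < x) h1
  have h2 := tanh_strictMono.lt_iff_lt (a := (0:ℝ)) (b := artanh x)
  rw [Real.tanh_zero, h] at h2
  exact h2.1 h0

lemma artanh_add {x y : ℝ} (hx1 : -1 < x) (hx2 : x < 1) (hy1 : -1 < y) (hy2 : y < 1) :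
    artanh x + artanh y = artanh ((x+y)/(1+x*y)) := by
  have h1 : (0:ℝ) < 1 - x := by linarith
  have h2 : (0:ℝ) < 1 + x := by linarith
  have h3 : (0:ℝ) < 1 - y := by linarith
  have h4 : (0:ℝ) < 1 + y := by linarith
  have h5 : (0:ℝ) < 1 + x*y := by nlinarith
  have hm : 1 - (x+y)/(1+x*y) = (1-x)*(1-y)/(1+x*y) := by field_simp; ring
  have hp : 1 + (x+y)/(1+x*y) = (1+x)*(1+y)/(1+x*y) := by field_simp; ring
  rw [artanh, artanh, artanh, hm, hp]
  rw [show (1+x)*(1+y)/(1+x*y) / ((1-x)*(1-y)/(1+x*y)) = ((1+x)/(1-x)) * ((1+y)/(1-y)) by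
    field_simp]
  rw [Real.log_mul (by positivity) (by positivity)]
  ring

lemma lt_of_sq_lt_sq'' {a b : ℝ} (ha : 0 ≤ a) (hb : 0 ≤ b) (h : a^2 < b^2) : a < b := by
  nlinarith

lemma Dpos_aux {s x : ℝ} (hx0 : 0 < x) (hxs : x < s) (hs1 : s < 1) :
    0 < (1+s^2)^2 - 4*x^2 := by
  nlinarith [sq_nonneg (1 - s^2)]

lemma Lpos_aux {s x c : ℝ} (hx0 : 0 < x) (hxs : x < s) (hc0 : 0 < c) (hc1 : c < 1) :
    0 < (1+s^2) - 2*x*c := by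
  have h1 : x*c < x*1 := mul_lt_mul_of_pos_left hc1 hx0
  nlinarith [sq_nonneg (1-s)]

lemma Lsq_aux {s s₀ x : ℝ} (hx0 : 0 < x) (key' : s₀*(1+s^2) < x*(1+s₀^2)) :
    (1+s^2)^2 - 4*x^2 < ((1+s^2) - 2*x*s₀)^2 := by
  nlinarith [mul_pos hx0 (sub_pos.2 key')]

lemma Mpos_aux {s x : ℝ} (hxs : x < s) : 0 < (1+s^2) - 2*x := by
  nlinarith [sq_nonneg (1-s)]

lemma Msq_aux {s x : ℝ} (hx0 : 0 < x) (hM : 0 < (1+s^2) - 2*x) :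
    ((1+s^2) - 2*x)^2 < (1+s^2)^2 - 4*x^2 := by
  nlinarith [mul_pos hx0 hM]

lemma A1_aux {x y s t : ℝ} (hxy : x^2+y^2 = s^2) (ht0 : -1 < t) (ht1 : t < 1)
    (hs0 : -1 < s) (hs1 : s < 1) : (x-t)^2+y^2 < (1-t*x)^2+(t*y)^2 := by
  nlinarith [mul_pos (by nlinarith : (0:ℝ) < 1-t^2) (by nlinarith : (0:ℝ) < 1-s^2)]


lemma sq_lt_one' {t : ℝ} (h0 : 0 ≤ t) (h1 : t < 1) : t^2 < 1 := by nlinarith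

lemma alpha_gt_one {α r : ℝ} (h0 : 0 ≤ α) (h2 : α^2 = 1+r^2) (hr : 0 < r) : 1 < α := by
  nlinarith

lemma alpha_gt_r {α r : ℝ} (h0 : 0 ≤ α) (h2 : α^2 = 1+r^2) (hr : 0 < r) : r < α := by
  nlinarith

lemma p_pos {α r : ℝ} (h0 : 0 ≤ α) (h2 : α^2 = 1+r^2) (hr : 0 < r) : 0 < α - r := by
  nlinarith

lemma p_lt_one {α r : ℝ} (h0 : 0 ≤ α) (h2 : α^2 = 1+r^2) (hr : 0 < r) : α - r < 1 := by
  nlinarith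

lemma T1_aux {α p s₀ : ℝ} (hp0 : 0 < p) (hp2 : 1 + p^2 = 2*α*p)
    (h1 : 0 < (p - s₀)*(1-p*s₀)) : 2*α*s₀ < 1 + s₀^2 := by
  have h2 : s₀*(1+p^2) < p*(1+s₀^2) := by nlinarith [h1]
  rw [hp2] at h2
  have h3 : p*(2*α*s₀) < p*(1+s₀^2) := by nlinarith [h2]
  exact lt_of_mul_lt_mul_left h3 hp0.le

set_option maxHeartbeats 2000000 in
theorem stmt_18 (a : ℂ) (r : ℝ) (hr : 0 < r) (horth : ‖a‖ ^ 2 = 1 + r ^ 2)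
    (k : ℝ) (hk : k ∈ Set.Ioo (0 : ℝ) 1) :
    ¬ hConvex (hDil k '' {z : ℂ | ‖z‖ < 1 ∧ r ≤ ‖z - a‖}) := by
  obtain ⟨hk0, hk1⟩ := hk
  intro hcon
  set α : ℝ := ‖a‖ with hαdef
  clear_value α
  have hα2 : α^2 = 1 + r^2 := horth
  have hα0 : (0:ℝ) ≤ α := by rw [hαdef]; exact norm_nonneg a
  have hα1 : 1 < α := alpha_gt_one hα0 hα2 hr
  have hαpos : (0:ℝ) < α := by linarith
  have hαr : r < α := alpha_gt_r hα0 hα2 hr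
  -- p and P
  have hp0 : (0:ℝ) < α - r := p_pos hα0 hα2 hr
  have hp1 : α - r < 1 := p_lt_one hα0 hα2 hr
  set p : ℝ := α - r with hpdef
  clear_value p
  have hp2 : 1 + p^2 = 2*α*p := by rw [hpdef]; linear_combination -hα2
  set P : ℝ := artanh p with hPdef
  clear_value P
  have hPp : Real.tanh P = p := by rw [hPdef]; exact tanh_artanh (by linarith) hp1
  have hP0 : 0 < P := by rw [hPdef]; exact artanh_pos hp0 hp1
  set s₀ : ℝ := Real.tanh (k * P) with hs₀def
  clear_value s₀
  have hs₀0 : 0 < s₀ := by rw [hs₀def]; exact tanh_pos (by positivity)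
  have hs₀p : s₀ < p := by
    rw [hs₀def, ← hPp]
    refine tanh_strictMono ?_
    calc k*P < 1*P := mul_lt_mul_of_pos_right hk1 hP0
    _ = P := one_mul P
  have hs₀1 : s₀ < 1 := by linarith
  have hT1 : 2*α*s₀ < 1 + s₀^2 := by
    have hps : p*s₀ < 1 := by
      have h0 := mul_lt_mul_of_pos_left hs₀1 hp0
      rw [mul_one] at h0
      linarith
    have h1 : (0:ℝ) < (p - s₀)*(1-p*s₀) := mul_pos (by linarith) (by linarith)
    exact T1_aux hp0 hp2 h1
  -- choice of s
  have hden : (0:ℝ) < 1 + s₀^2 := by positivity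
  set s : ℝ := (2*α*s₀/(1+s₀^2) + 1)/2 with hsdef
  clear_value s
  have hT0 : (0:ℝ) < 2*α*s₀/(1+s₀^2) := by positivity
  have hTlt : 2*α*s₀/(1+s₀^2) < 1 := (div_lt_one hden).2 hT1
  have hs0 : 0 < s := by rw [hsdef]; linarith
  have hs1 : s < 1 := by rw [hsdef]; linarith
  have hsT : 2*α*s₀/(1+s₀^2) < s := by rw [hsdef]; linarith
  have key : α*s₀*(1+s^2) < s*(1+s₀^2) := by
    have h2 : 2*α*s₀ < s*(1+s₀^2) := by rwa [div_lt_iff₀ hden] at hsT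
    have hs2 : s^2 < 1 := sq_lt_one' hs0.le hs1
    have h3 : (α*s₀)*(1+s^2) < (α*s₀)*2 :=
      mul_lt_mul_of_pos_left (by linarith) (mul_pos hαpos hs₀0)
    linarith
  -- x, y, D, q, t
  set x : ℝ := s/α with hxdef
  clear_value x
  set y : ℝ := s*r/α with hydef
  clear_value y
  have hx0 : 0 < x := by rw [hxdef]; positivity
  have hy0 : 0 < y := by rw [hydef]; positivity
  have hxs : s = α * x := by rw [hxdef]; field_simp
  have hx_lt_s : x < s := by
    rw [hxdef, div_lt_iff₀ hαpos]
    calc s = s*1 := by ring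
    _ < s*α := mul_lt_mul_of_pos_left hα1 hs0
  have hx1 : x < 1 := lt_trans hx_lt_s hs1
  have hxy : x^2 + y^2 = s^2 := by
    rw [hxdef, hydef]
    field_simp
    linear_combination (-1) * hα2
  set D : ℝ := (1+s^2)^2 - 4*s^2/α^2 with hDdef
  clear_value D
  have hD' : D = (1+s^2)^2 - 4*x^2 := by
    rw [hDdef, hxdef, div_pow]; ring
  have hDpos : 0 < D := by
    rw [hD']; exact Dpos_aux hx0 hx_lt_s hs1
  set q : ℝ := Real.sqrt D with hqdef
  clear_value q
  have hq2 : q^2 = D := by rw [hqdef]; exact Real.sq_sqrt hDpos.le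
  have hq0 : 0 < q := by rw [hqdef]; exact Real.sqrt_pos.2 hDpos
  have hq2' : q^2 = (1+s^2)^2 - 4*x^2 := hq2.trans hD'
  set t : ℝ := ((1+s^2) - q)*α/(2*s) with htdef
  clear_value t
  have hq_eq : q = (1+s^2) - 2*t*x := by
    rw [htdef, hxdef]; field_simp; ring
  have hquad : x*(1+t^2) = t*(1+s^2) := by
    have hsub : ((1+s^2) - 2*t*x)^2 = (1+s^2)^2 - 4*x^2 := by rw [← hq_eq]; exact hq2'
    have h4x : x*(x*(1+t^2)) = x*(t*(1+s^2)) := by linear_combination (1/4) * hsub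
    exact mul_left_cancel₀ hx0.ne' h4x
  have key' : s₀*(1+s^2) < x*(1+s₀^2) := by
    refine lt_of_mul_lt_mul_left ?_ hα0
    calc α*(s₀*(1+s^2)) = α*s₀*(1+s^2) := by ring
    _ < s*(1+s₀^2) := key
    _ = α*(x*(1+s₀^2)) := by rw [hxs]; ring
  have ht_gt : s₀ < t := by
    have hL : (0:ℝ) < (1+s^2) - 2*x*s₀ := Lpos_aux hx0 hx_lt_s hs₀0 hs₀1
    have hLsq : q^2 < ((1+s^2) - 2*x*s₀)^2 := by
      rw [hq2']; exact Lsq_aux hx0 key'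
    have hq_lt : q < (1+s^2) - 2*x*s₀ := lt_of_sq_lt_sq'' hq0.le hL.le hLsq
    rw [hq_eq] at hq_lt
    have h5 : x*s₀ < x*t := by linarith
    exact lt_of_mul_lt_mul_left h5 hx0.le
  have ht0 : 0 < t := lt_trans hs₀0 ht_gt
  have ht1 : t < 1 := by
    have hM : (0:ℝ) < (1+s^2) - 2*x := Mpos_aux hx_lt_s
    have hMsq : ((1+s^2) - 2*x)^2 < q^2 := by
      rw [hq2']; exact Msq_aux hx0 hM
    have hq_gt : (1+s^2) - 2*x < q := lt_of_sq_lt_sq'' hM.le hq0.le hMsq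
    rw [hq_eq] at hq_gt
    have h5 : x*t < x*1 := by linarith
    exact lt_of_mul_lt_mul_left h5 hx0.le
  have htx1 : t*x < 1 := by
    have h6 : t*x < t*1 := mul_lt_mul_of_pos_left hx1 ht0
    linarith
  -- complex setup
  have hαC : (α:ℂ) ≠ 0 := by exact_mod_cast hαpos.ne'
  set e : ℂ := a / (α:ℂ) with hedef
  clear_value e
  have hae : a = (α:ℂ) * e := by rw [hedef]; field_simp
  have habs_e : ‖e‖ = 1 := by
    rw [hedef, norm_div, Complex.norm_real, Real.norm_eq_abs, abs_of_pos hαpos, ← hαdef, div_self hαpos.ne']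
  have hee : (starRingEnd ℂ) e * e = 1 := by
    rw [mul_comm, Complex.mul_conj, Complex.normSq_eq_norm_sq, habs_e]
    norm_num
  set u : ℂ := e * ((x:ℂ) + (y:ℂ)*Complex.I) with hudef
  clear_value u
  set v : ℂ := e * ((x:ℂ) - (y:ℂ)*Complex.I) with hvdef
  clear_value v
  set z : ℂ := (t:ℂ) * e with hzdef
  clear_value z
  have hzabs : ‖z‖ = t := by
    rw [hzdef, norm_mul, Complex.norm_real, Real.norm_eq_abs, habs_e, mul_one, abs_of_pos ht0]
  -- membership of u and v
  set S : ℝ := Real.tanh (artanh s / k) with hSdef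
  clear_value S
  have hS0 : 0 < S := by rw [hSdef]; exact tanh_pos (div_pos (artanh_pos hs0 hs1) hk0)
  have hS1 : S < 1 := by rw [hSdef]; exact tanh_lt_one _
  have hSk : Real.tanh (k * artanh S) = s := by
    rw [hSdef, artanh_tanh, mul_div_cancel₀ _ hk0.ne']
    exact tanh_artanh (by linarith) hs1
  have hmem : ∀ ε : ℝ, ε^2 = 1 →
      e * ((x:ℂ) + ((ε*y:ℝ):ℂ)*Complex.I) ∈
        hDil k '' {w : ℂ | ‖w‖ < 1 ∧ r ≤ ‖w - a‖} := by
    intro ε hε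
    have habsw : ‖e * (((S/α : ℝ):ℂ) + ((ε*(S*r/α) : ℝ):ℂ)*Complex.I)‖ = S := by
      rw [norm_mul, habs_e, one_mul, Complex.norm_add_mul_I]
      rw [show (S/α)^2 + (ε*(S*r/α))^2 = S^2 by
        field_simp
        linear_combination (-1) * hα2 + r^2 * hε]
      exact Real.sqrt_sq hS0.le
    refine ⟨e * (((S/α : ℝ):ℂ) + ((ε*(S*r/α) : ℝ):ℂ)*Complex.I), ⟨?_, ?_⟩, ?_⟩
    · rw [habsw]; exact hS1
    · rw [show e * (((S/α : ℝ):ℂ) + ((ε*(S*r/α) : ℝ):ℂ)*Complex.I) - a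
          = e * (((S/α - α : ℝ):ℂ) + ((ε*(S*r/α) : ℝ):ℂ)*Complex.I) by
        rw [hae]; push_cast; ring]
      rw [norm_mul, habs_e, one_mul, Complex.norm_add_mul_I]
      rw [Real.le_sqrt hr.le (by positivity)]
      have hiden : (S/α - α)^2 + (ε*(S*r/α))^2 - r^2 = (S-1)^2 := by
        field_simp
        linear_combination (α^2 - S^2) * hα2 + (S*r)^2 * hε
      linarith [sq_nonneg (S-1)]
    · rw [hDil, habsw, hSk, Complex.real_smul]
      rw [hxdef, hydef]
      have hSC : (S:ℂ) ≠ 0 := by exact_mod_cast hS0.ne'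
      push_cast
      field_simp
  have hu_mem : u ∈ hDil k '' {w : ℂ | ‖w‖ < 1 ∧ r ≤ ‖w - a‖} := by
    have h := hmem 1 (by norm_num)
    rw [show ((1*y : ℝ):ℂ) = (y:ℂ) by push_cast; ring] at h
    rw [hudef]; exact h
  have hv_mem : v ∈ hDil k '' {w : ℂ | ‖w‖ < 1 ∧ r ≤ ‖w - a‖} := by
    have h := hmem (-1) (by norm_num)
    rw [show ((-1*y : ℝ):ℂ) = -(y:ℂ) by push_cast; ring] at h
    rw [show (x:ℂ) + -(y:ℂ)*Complex.I = (x:ℂ) - (y:ℂ)*Complex.I by ring] at h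
    rw [hvdef]; exact h
  -- z is not in the image
  have hz_not : z ∉ hDil k '' {w : ℂ | ‖w‖ < 1 ∧ r ≤ ‖w - a‖} := by
    rintro ⟨w, ⟨hw1, hw2⟩, hw3⟩
    have hz0 : z ≠ 0 := by
      intro h
      rw [h, norm_zero] at hzabs
      exact ht0.ne hzabs
    have hw0 : w ≠ 0 := by
      rintro rfl
      rw [hDil] at hw3
      simp at hw3
      exact hz0 hw3.symm
    set ρ : ℝ := ‖w‖ with hρdef
    clear_value ρ
    have hρ0 : 0 < ρ := by rw [hρdef]; exact norm_pos_iff.mpr hw0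
    have hc0 : 0 < Real.tanh (k * artanh ρ) := tanh_pos (mul_pos hk0 (artanh_pos hρ0 hw1))
    have habsim : Real.tanh (k * artanh ρ) = t := by
      have h := congrArg norm hw3
      rw [hDil, Complex.real_smul, norm_mul, Complex.norm_real, Real.norm_eq_abs, ← hρdef, hzabs] at h
      rw [abs_of_pos (div_pos hc0 hρ0)] at h
      rw [div_mul_cancel₀ _ hρ0.ne'] at h
      exact h
    have hρp : p < ρ := by
      have h1 : Real.tanh (k*P) < Real.tanh (k * artanh ρ) := by
        rw [habsim, ← hs₀def]; exact ht_gt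
      have h2 : k*P < k*(artanh ρ) := tanh_strictMono.lt_iff_lt.1 h1
      have h3 : P < artanh ρ := (mul_lt_mul_iff_right₀ hk0).1 h2
      have h4 : Real.tanh P < Real.tanh (artanh ρ) := tanh_strictMono h3
      rwa [hPp, tanh_artanh (by linarith) hw1] at h4
    have htC : (t:ℂ) ≠ 0 := by exact_mod_cast ht0.ne'
    have hρC : (ρ:ℂ) ≠ 0 := by exact_mod_cast hρ0.ne'
    have hwdir : w = (ρ:ℂ) * e := by
      rw [hDil, Complex.real_smul, ← hρdef, habsim] at hw3
      have h6 : ((ρ/t : ℝ):ℂ) * (((t/ρ : ℝ):ℂ) * w) = w := by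
        push_cast
        rw [← mul_assoc, show ((ρ:ℂ)/t) * ((t:ℂ)/ρ) = 1 by field_simp, one_mul]
      calc w = ((ρ/t : ℝ):ℂ) * (((t/ρ : ℝ):ℂ) * w) := h6.symm
      _ = ((ρ/t : ℝ):ℂ) * z := by rw [hw3]
      _ = (ρ:ℂ) * e := by rw [hzdef]; push_cast; field_simp
    have habswa : ‖w - a‖ = α - ρ := by
      rw [hwdir, hae, show (ρ:ℂ)*e - (α:ℂ)*e = ((ρ-α:ℝ):ℂ)*e by push_cast; ring]
      rw [norm_mul, Complex.norm_real, Real.norm_eq_abs, habs_e, mul_one, abs_of_nonpos (by linarith), neg_sub]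
    rw [habswa] at hw2
    rw [hpdef] at hρp
    linarith
  -- the metric identity
  set n1 : ℝ := Real.sqrt ((x-t)^2+y^2) with hn1def
  clear_value n1
  set d1 : ℝ := Real.sqrt ((1-t*x)^2+(t*y)^2) with hd1def
  clear_value d1
  have hn1sq : n1^2 = (x-t)^2+y^2 := by rw [hn1def]; exact Real.sq_sqrt (by positivity)
  have h1tx : (0:ℝ) < 1 - t*x := by linarith
  have hd1sq : d1^2 = (1-t*x)^2+(t*y)^2 := by rw [hd1def]; exact Real.sq_sqrt (by positivity)
  have hn1nn : 0 ≤ n1 := by rw [hn1def]; positivity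
  have hd1pos : 0 < d1 := by
    rw [hd1def]
    exact Real.sqrt_pos.2 (add_pos_of_pos_of_nonneg (pow_pos h1tx 2) (sq_nonneg _))
  have key_uz : ‖(u - z)/(1 - (starRingEnd ℂ) z * u)‖ = n1/d1 := by
    have h1 : u - z = e * (((x - t : ℝ):ℂ) + (y:ℂ)*Complex.I) := by
      rw [hudef, hzdef]; push_cast; ring
    have h2 : (starRingEnd ℂ) z * u = (t:ℂ) * ((x:ℂ) + (y:ℂ)*Complex.I) := by
      rw [hudef, hzdef, map_mul, Complex.conj_ofReal]
      calc (t:ℂ) * (starRingEnd ℂ) e * (e * ((x:ℂ)+(y:ℂ)*Complex.I))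
          = ((starRingEnd ℂ) e * e) * ((t:ℂ) * ((x:ℂ)+(y:ℂ)*Complex.I)) := by ring
      _ = (t:ℂ) * ((x:ℂ) + (y:ℂ)*Complex.I) := by rw [hee, one_mul]
    rw [h1, h2, norm_div, norm_mul, habs_e, one_mul]
    rw [show (1:ℂ) - (t:ℂ)*((x:ℂ)+(y:ℂ)*Complex.I)
        = ((1 - t*x : ℝ):ℂ) + ((-(t*y) : ℝ):ℂ)*Complex.I by push_cast; ring]
    rw [Complex.norm_add_mul_I, Complex.norm_add_mul_I, neg_sq]
    rw [hn1def, hd1def]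
  have key_zv : ‖(z - v)/(1 - (starRingEnd ℂ) v * z)‖ = n1/d1 := by
    have h1 : z - v = e * (((t - x : ℝ):ℂ) + (y:ℂ)*Complex.I) := by
      rw [hvdef, hzdef]; push_cast; ring
    have hconjv : (starRingEnd ℂ) v = (starRingEnd ℂ) e * ((x:ℂ) + (y:ℂ)*Complex.I) := by
      rw [hvdef, map_mul, map_sub, map_mul, Complex.conj_ofReal, Complex.conj_ofReal,
        Complex.conj_I]
      ring
    have h2 : (starRingEnd ℂ) v * z = (t:ℂ) * ((x:ℂ) + (y:ℂ)*Complex.I) := by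
      rw [hconjv, hzdef]
      calc (starRingEnd ℂ) e * ((x:ℂ) + (y:ℂ)*Complex.I) * ((t:ℂ) * e)
          = ((starRingEnd ℂ) e * e) * ((t:ℂ) * ((x:ℂ)+(y:ℂ)*Complex.I)) := by ring
      _ = (t:ℂ) * ((x:ℂ) + (y:ℂ)*Complex.I) := by rw [hee, one_mul]
    rw [h1, h2, norm_div, norm_mul, habs_e, one_mul]
    rw [show (1:ℂ) - (t:ℂ)*((x:ℂ)+(y:ℂ)*Complex.I)
        = ((1 - t*x : ℝ):ℂ) + ((-(t*y) : ℝ):ℂ)*Complex.I by push_cast; ring]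
    rw [Complex.norm_add_mul_I, Complex.norm_add_mul_I, neg_sq]
    rw [show (t-x)^2 = (x-t)^2 by ring]
    rw [hn1def, hd1def]
  have key_uv : ‖(u - v)/(1 - (starRingEnd ℂ) v * u)‖ = (2*y)/q := by
    have h1 : u - v = e * (((2*y : ℝ):ℂ)*Complex.I) := by
      rw [hudef, hvdef]; push_cast; ring
    have hconjv : (starRingEnd ℂ) v = (starRingEnd ℂ) e * ((x:ℂ) + (y:ℂ)*Complex.I) := by
      rw [hvdef, map_mul, map_sub, map_mul, Complex.conj_ofReal, Complex.conj_ofReal,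
        Complex.conj_I]
      ring
    have h2 : (starRingEnd ℂ) v * u = ((x:ℂ) + (y:ℂ)*Complex.I)^2 := by
      rw [hconjv, hudef]
      calc (starRingEnd ℂ) e * ((x:ℂ) + (y:ℂ)*Complex.I) * (e * ((x:ℂ)+(y:ℂ)*Complex.I))
          = ((starRingEnd ℂ) e * e) * (((x:ℂ)+(y:ℂ)*Complex.I)^2) := by ring
      _ = ((x:ℂ)+(y:ℂ)*Complex.I)^2 := by rw [hee, one_mul]
    have hIsq : Complex.I^2 = -1 := Complex.I_sq
    rw [h1, h2, norm_div, norm_mul, habs_e, one_mul]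
    rw [show (1:ℂ) - ((x:ℂ)+(y:ℂ)*Complex.I)^2
        = ((1 - x^2 + y^2 : ℝ):ℂ) + ((-(2*x*y) : ℝ):ℂ)*Complex.I by
      push_cast; linear_combination (-(y:ℂ)^2) * hIsq]
    rw [Complex.norm_add_mul_I, neg_sq]
    rw [norm_mul, Complex.norm_real, Real.norm_eq_abs, Complex.norm_I, mul_one, abs_of_pos (by linarith)]
    have harg : (1-x^2+y^2)^2 + (2*x*y)^2 = D := by
      rw [hD']; linear_combination (2+x^2+y^2+s^2) * hxy
    rw [harg, hqdef]
  -- the pieces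
  have hAlt : n1/d1 < 1 := by
    rw [div_lt_one hd1pos]
    refine lt_of_sq_lt_sq'' hn1nn hd1pos.le ?_
    rw [hn1sq, hd1sq]
    exact A1_aux hxy (by linarith) ht1 (by linarith) hs1
  have hA0 : 0 ≤ n1/d1 := div_nonneg hn1nn hd1pos.le
  have hzero : x*(1+t^2) - t*(1+x^2+y^2) = 0 := by linear_combination hquad - t*hxy
  have hnd : n1*d1 = y*(1-t^2) := by
    rw [hn1def, hd1def, ← Real.sqrt_mul (by positivity)]
    rw [show ((x-t)^2+y^2)*((1-t*x)^2+(t*y)^2) = (y*(1-t^2))^2 by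
      linear_combination (x*(1+t^2) - t*(1+x^2+y^2)) * hzero]
    exact Real.sqrt_sq (mul_nonneg hy0.le (by linarith [sq_lt_one' ht0.le ht1]))
  have hdsum : d1^2+n1^2 = (1+t^2)*(1+s^2)-4*t*x := by
    rw [hn1sq, hd1sq]; linear_combination (1+t^2)*hxy
  have hq1t : q*(1-t^2) = (1+t^2)*(1+s^2)-4*t*x := by
    rw [hq_eq]; linear_combination 2*t*hquad
  have hmain : 2*n1*q*d1 = 2*y*(d1^2+n1^2) := by
    linear_combination 2*q*hnd + (-2*y)*hdsum + 2*y*hq1t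
  have hfrac : 2*(n1/d1)/(1+(n1/d1)^2) = 2*y/q := by
    rw [div_eq_div_iff (by positivity) hq0.ne']
    have e1 : (2*(n1/d1))*q*d1^2 = 2*n1*q*d1 := by
      field_simp
    have e2 : (2*y*(1+(n1/d1)^2))*d1^2 = 2*y*(d1^2+n1^2) := by
      field_simp
    have hgoal2 : (2*(n1/d1))*q*d1^2 = (2*y*(1+(n1/d1)^2))*d1^2 := by
      rw [e1, e2, hmain]
    exact mul_right_cancel₀ (pow_ne_zero 2 hd1pos.ne') hgoal2
  have hdistuz : hdist u z = 2 * artanh (n1/d1) := by rw [hdist, key_uz]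
  have hdistzv : hdist z v = 2 * artanh (n1/d1) := by rw [hdist, key_zv]
  have hdistuv : hdist u v = 2 * artanh (2*y/q) := by rw [hdist, key_uv]
  have hiden : hdist u z + hdist z v = hdist u v := by
    rw [hdistuz, hdistzv, hdistuv]
    have hadd := artanh_add (x := n1/d1) (y := n1/d1) (by linarith) hAlt (by linarith) hAlt
    rw [show (2:ℝ)*artanh (n1/d1) + 2*artanh (n1/d1)
        = 2*(artanh (n1/d1) + artanh (n1/d1)) by ring, hadd]
    rw [show (n1/d1 + n1/d1)/(1+(n1/d1)*(n1/d1)) = 2*(n1/d1)/(1+(n1/d1)^2) by ring, hfrac]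
  have hzlt : ‖z‖ < 1 := by rw [hzabs]; exact ht1
  exact hz_not (hcon u hu_mem v hv_mem z hzlt hiden)
end
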